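/- Let 0 < α ≤ β ≤ 1 and let X be a real random variable. Then Σ_{m,n ≥ 1} Σ_{k=0}^m Σ_{l=0}^n P(A_{m-k}^{α-1} A_{n-l}^{β-1} |X| > A_m^α A_n^β) < ∞ if and only if Σ_{m,n ≥ 1} Σ_{k=1}^m Σ_{l=1}^n P(k^{α-1} l^{β-1} |X| > m^α n^β) < ∞. -/

import Mathlib

set_option maxHeartbeats 1000000

open MeasureTheory ProbabilityTheory Filter Finset Topology

/-- `cesaroA α n` is the Cesàro coefficient `A_n^α = (α+1)(α+2)⋯(α+n)/n!`
(with `A_0^α = 1`). Note that this also gives `A_n^{-1} = 0` for `n ≥ 1`. -/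
noncomputable def cesaroA (α : ℝ) (n : ℕ) : ℝ :=
  ∏ j ∈ Finset.range n, (α + (j + 1)) / (j + 1)

namespace CesaroAux

open Real ENNReal


noncomputable def theta (γ : ℝ) (N l : ℕ) : ℝ := (N : ℝ) ^ γ * (l : ℝ) ^ (1 - γ)

lemma theta_nonneg (γ : ℝ) (N l : ℕ) : 0 ≤ theta γ N l :=
  mul_nonneg (Real.rpow_nonneg (Nat.cast_nonneg N) _) (Real.rpow_nonneg (Nat.cast_nonneg l) _)

lemma theta_one (γ : ℝ) : theta γ 1 1 = 1 := by
  simp [theta]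

lemma tsum_div_count (G : ℕ → ℝ≥0∞) {r : ℕ} (hr : 0 < r) :
    ∑' n : ℕ, G (n / r) = (r : ℝ≥0∞) * ∑' q, G q := by
  haveI : NeZero r := ⟨hr.ne'⟩
  have h1 : ∑' n : ℕ, G (n / r) = ∑' p : ℕ × Fin r, G p.1 :=
    (Nat.divModEquiv r).tsum_eq (fun p : ℕ × Fin r => G p.1)
  rw [h1, ENNReal.tsum_prod']
  simp only [tsum_fintype, Finset.sum_const, Finset.card_univ, Fintype.card_fin, nsmul_eq_mul]
  rw [ENNReal.tsum_mul_left]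

lemma tsum_shift_le (G : ℕ → ℝ≥0∞) : ∑' n : ℕ, G (n + 1) ≤ ∑' n, G n :=
  ENNReal.tsum_comp_le_tsum_of_injective (f := fun n : ℕ => n + 1) (add_left_injective 1) G

lemma one_var {h : ℝ → ℝ≥0∞} (hh : Antitone h) {γ : ℝ} (hγ : 0 < γ)
    (hfin : ∀ t : ℝ, 0 < t → h t ≠ ⊤)
    (hsum : ∑' n : ℕ, h (((n : ℝ) + 1) ^ γ) ≠ ⊤)
    {c : ℝ} (hc : 0 < c) :
    ∑' n : ℕ, h (c * ((n : ℝ) + 1) ^ γ) ≠ ⊤ := by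
  obtain ⟨r0, hr0⟩ := exists_nat_gt ((1 / c) ^ (1 / γ))
  set r := max r0 1 with hrdef
  have hr1 : 1 ≤ r := le_max_right _ _
  have hrposn : 0 < r := hr1
  have hrpos : (0 : ℝ) < r := by exact_mod_cast hrposn
  have hrge : (1 / c) ^ (1 / γ) ≤ (r : ℝ) := by
    refine hr0.le.trans ?_
    exact_mod_cast le_max_left r0 1
  have hcr : 1 / c ≤ (r : ℝ) ^ γ := by
    have h1 : ((1 / c) ^ (1 / γ)) ^ γ ≤ (r : ℝ) ^ γ :=
      Real.rpow_le_rpow (Real.rpow_nonneg (by positivity) _) hrge hγ.le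
    rwa [← Real.rpow_mul (by positivity), one_div_mul_cancel hγ.ne', Real.rpow_one] at h1
  set F : ℕ → ℝ≥0∞ := fun q => if q = 0 then h c else h ((q : ℝ) ^ γ) with hF
  have key : ∀ n : ℕ, h (c * ((n : ℝ) + 1) ^ γ) ≤ F ((n + 1) / r) := by
    intro n
    have hbase : (1 : ℝ) ≤ ((n : ℝ) + 1) := by
      have := Nat.cast_nonneg (α := ℝ) n; linarith
    by_cases hq : (n + 1) / r = 0
    · rw [hq]
      simp only [hF, if_pos rfl]
      apply hh
      have : (1 : ℝ) ≤ ((n : ℝ) + 1) ^ γ := by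
        calc (1:ℝ) = 1 ^ γ := (Real.one_rpow γ).symm
        _ ≤ ((n : ℝ) + 1) ^ γ := Real.rpow_le_rpow zero_le_one hbase hγ.le
      nlinarith
    · simp only [hF, if_neg hq]
      apply hh
      have h1 : ((((n + 1) / r : ℕ) : ℝ)) ≤ ((n : ℝ) + 1) / (r : ℝ) := by
        have := Nat.cast_div_le (α := ℝ) (m := n + 1) (n := r)
        push_cast at this
        exact this
      calc ((((n + 1) / r : ℕ) : ℝ)) ^ γ ≤ (((n : ℝ) + 1) / (r : ℝ)) ^ γ :=
            Real.rpow_le_rpow (Nat.cast_nonneg _) h1 hγ.le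
        _ = ((n : ℝ) + 1) ^ γ / (r : ℝ) ^ γ := Real.div_rpow (by positivity : (0:ℝ) ≤ (n:ℝ)+1) hrpos.le γ
        _ ≤ c * ((n : ℝ) + 1) ^ γ := by
            rw [div_le_iff₀ (by positivity)]
            have hpow : (0:ℝ) < ((n : ℝ) + 1) ^ γ := Real.rpow_pos_of_pos (by positivity) _
            have : 1 ≤ c * (r:ℝ) ^ γ := by
              rw [one_div] at hcr
              calc (1:ℝ) = c * c⁻¹ := (mul_inv_cancel₀ hc.ne').symm
              _ ≤ c * (r:ℝ)^γ := by nlinarith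
            nlinarith
  have hb1 : ∑' n : ℕ, h (c * ((n : ℝ) + 1) ^ γ) ≤ ∑' n : ℕ, F ((n + 1) / r) :=
    ENNReal.tsum_le_tsum key
  have hb2 : ∑' n : ℕ, F ((n + 1) / r) ≤ ∑' n : ℕ, F (n / r) :=
    tsum_shift_le (fun n => F (n / r))
  have hb3 : ∑' n : ℕ, F (n / r) = (r : ℝ≥0∞) * ∑' q, F q := tsum_div_count F hrposn
  have hb4 : ∑' q, F q ≠ ⊤ := by
    rw [tsum_eq_zero_add' (f := F) ENNReal.summable]
    refine ENNReal.add_ne_top.mpr ⟨by simp [hF]; exact hfin c hc, ?_⟩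
    have he : ∑' q : ℕ, F (q + 1) = ∑' q : ℕ, h (((q : ℝ) + 1) ^ γ) := by
      refine tsum_congr fun q => ?_
      simp only [hF, Nat.succ_ne_zero, if_neg]
      push_cast
      rfl
    rw [he]; exact hsum
  refine ne_top_of_le_ne_top ?_ (hb1.trans (hb2.trans_eq hb3))
  exact ENNReal.mul_ne_top (ENNReal.natCast_ne_top r) hb4

lemma icc_tsum (g : ℕ → ℕ → ℝ≥0∞) :
    ∑' n : ℕ, ∑ l ∈ Icc 1 (n + 1), g n l
      = ∑' p : ℕ × ℕ, if p.2 ≤ p.1 then g p.1 (p.2 + 1) else 0 := by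
  rw [ENNReal.tsum_prod']
  refine tsum_congr fun n => ?_
  have h1 : ∑' b : ℕ, (if b ≤ n then g n (b + 1) else 0)
      = ∑ b ∈ range (n + 1), (if b ≤ n then g n (b + 1) else 0) := by
    refine tsum_eq_sum fun b hb => ?_
    exact if_neg fun hle => hb (Finset.mem_range.mpr (Nat.lt_succ_of_le hle))
  rw [h1]
  rw [Finset.sum_congr rfl (fun b hb => if_pos (by simpa using Nat.lt_succ_iff.mp (Finset.mem_range.mp hb)))]
  rw [← Finset.Ico_add_one_right_eq_Icc, Finset.sum_Ico_eq_sum_range]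
  norm_num
  exact Finset.sum_congr rfl fun b _ => by rw [Nat.add_comm 1 b]

lemma pair {h : ℝ → ℝ≥0∞} (hh : Antitone h) {γ : ℝ} (hγ : 0 < γ) (hγ1 : γ ≤ 1)
    (hfin : ∀ t : ℝ, 0 < t → h t ≠ ⊤)
    (hsum : ∑' n : ℕ, ∑ l ∈ Icc 1 (n + 1), h (theta γ (n + 1) l) ≠ ⊤)
    {c : ℝ} (hc : 0 < c) :
    ∑' n : ℕ, ∑ l ∈ Icc 1 (n + 1), h (c * theta γ (n + 1) l) ≠ ⊤ := by
  rw [icc_tsum] at hsum ⊢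
  -- choose r
  set r := max (⌈1 / c⌉₊) 1 with hrdef
  have hr1 : 1 ≤ r := le_max_right _ _
  have hrpos : (0 : ℝ) < r := by exact_mod_cast hr1
  have hinvr : 1 / (r : ℝ) ≤ c := by
    rw [div_le_iff₀ hrpos]
    have h1 : 1 / c ≤ (r : ℝ) := le_trans (Nat.le_ceil _) (by exact_mod_cast le_max_left _ _)
    rw [div_le_iff₀ hc] at h1
    linarith
  set T1 : ℕ × ℕ → ℝ≥0∞ := fun p => if p.2 ≤ p.1 then h (theta γ (p.1 + 1) (p.2 + 1)) else 0
    with hT1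
  set F : ℕ × ℕ → ℝ≥0∞ := fun q => if 1 ≤ q.2 ∧ q.2 ≤ q.1 then h (theta γ q.1 q.2) else 0
    with hF
  -- the one-dimensional slice of hsum
  have hslice : ∑' n : ℕ, h (((n : ℝ) + 1) ^ γ) ≠ ⊤ := by
    refine ne_top_of_le_ne_top hsum ?_
    have := ENNReal.tsum_comp_le_tsum_of_injective
      (f := fun n : ℕ => ((n, 0) : ℕ × ℕ)) (fun a b hab => by simpa using congrArg Prod.fst hab)
      T1
    refine le_trans (le_of_eq (tsum_congr fun n => ?_)) this
    simp only [hT1, if_pos (Nat.zero_le n)]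
    congr 1
    simp [theta]
  -- key termwise bound
  have key : ∀ p : ℕ × ℕ,
      (if p.2 ≤ p.1 then h (c * theta γ (p.1 + 1) (p.2 + 1)) else 0)
        ≤ (if p.2 + 1 < r then h (c * ((p.1 : ℝ) + 1) ^ γ) else 0)
            + F ((p.1 + 1) / r, (p.2 + 1) / r) := by
    intro p
    by_cases hcon : p.2 ≤ p.1
    · rw [if_pos hcon]
      set N := p.1 + 1
      set L := p.2 + 1
      have hL1 : (1 : ℝ) ≤ (L : ℝ) := by exact_mod_cast Nat.one_le_iff_ne_zero.mpr (Nat.succ_ne_zero _)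
      have hN1 : (1 : ℝ) ≤ (N : ℝ) := by exact_mod_cast Nat.one_le_iff_ne_zero.mpr (Nat.succ_ne_zero _)
      by_cases hLr : L < r
      · rw [if_pos hLr]
        refine le_trans ?_ le_self_add
        apply hh
        have h2 : (1 : ℝ) ≤ (L : ℝ) ^ (1 - γ) := by
          calc (1:ℝ) = 1 ^ (1 - γ) := (Real.one_rpow _).symm
          _ ≤ (L : ℝ) ^ (1 - γ) := Real.rpow_le_rpow zero_le_one hL1 (by linarith)
        have h3 : ((N : ℝ)) ^ γ ≤ theta γ N L := by
          rw [theta]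
          nlinarith [Real.rpow_pos_of_pos (lt_of_lt_of_le one_pos hN1) γ]
        have h4 : ((p.1 : ℝ) + 1) ^ γ = ((N : ℝ)) ^ γ := by push_cast [N]; ring_nf
        rw [h4]
        nlinarith
      · push_neg at hLr
        refine le_trans ?_ le_add_self
        have hq2 : 1 ≤ L / r := (Nat.one_le_div_iff (by omega)).mpr hLr
        have hq21 : L / r ≤ N / r := Nat.div_le_div_right (by omega)
        simp only [hF]
        rw [if_pos ⟨hq2, hq21⟩]
        apply hh
        -- theta γ (N/r) (L/r) ≤ c * theta γ N L
        have hc1 : ((N / r : ℕ) : ℝ) ≤ (N : ℝ) / (r : ℝ) := Nat.cast_div_le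
        have hc2 : ((L / r : ℕ) : ℝ) ≤ (L : ℝ) / (r : ℝ) := Nat.cast_div_le
        have hstep : theta γ (N / r) (L / r) ≤ ((N:ℝ)/(r:ℝ)) ^ γ * ((L:ℝ)/(r:ℝ)) ^ (1 - γ) := by
          refine mul_le_mul ?_ ?_ (Real.rpow_nonneg (Nat.cast_nonneg _) _) (Real.rpow_nonneg (by positivity) _)
          · exact Real.rpow_le_rpow (Nat.cast_nonneg _) hc1 hγ.le
          · exact Real.rpow_le_rpow (Nat.cast_nonneg _) hc2 (by linarith)
        refine hstep.trans ?_
        have hsplit : ((N:ℝ)/(r:ℝ)) ^ γ * ((L:ℝ)/(r:ℝ)) ^ (1 - γ)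
            = theta γ N L / (r : ℝ) := by
          rw [Real.div_rpow (by positivity) hrpos.le, Real.div_rpow (by positivity) hrpos.le]
          rw [theta, div_mul_div_comm]
          congr 1
          rw [← Real.rpow_add hrpos]
          norm_num
        rw [hsplit]
        calc theta γ N L / (r : ℝ) = (1 / (r:ℝ)) * theta γ N L := by ring
        _ ≤ c * theta γ N L := mul_le_mul_of_nonneg_right hinvr (theta_nonneg _ _ _)
    · rw [if_neg hcon]
      exact zero_le
  -- sum the bound
  have hA : ∑' p : ℕ × ℕ, (if p.2 + 1 < r then h (c * ((p.1 : ℝ) + 1) ^ γ) else 0) ≠ ⊤ := by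
    have hone : ∑' n : ℕ, h (c * ((n : ℝ) + 1) ^ γ) ≠ ⊤ := one_var hh hγ hfin hslice hc
    rw [ENNReal.tsum_prod']
    have hb : ∀ n : ℕ, (∑' l : ℕ, if l + 1 < r then h (c * ((n : ℝ) + 1) ^ γ) else 0)
        ≤ (r : ℝ≥0∞) * h (c * ((n : ℝ) + 1) ^ γ) := by
      intro n
      have : (∑' l : ℕ, if l + 1 < r then h (c * ((n : ℝ) + 1) ^ γ) else 0)
          = ∑ l ∈ range r, (if l + 1 < r then h (c * ((n : ℝ) + 1) ^ γ) else 0) := by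
        refine tsum_eq_sum fun l hl => if_neg fun hlt => hl (Finset.mem_range.mpr (by omega))
      rw [this]
      calc ∑ l ∈ range r, (if l + 1 < r then h (c * ((n : ℝ) + 1) ^ γ) else 0)
          ≤ ∑ _l ∈ range r, h (c * ((n : ℝ) + 1) ^ γ) := by
            refine Finset.sum_le_sum fun i _ => ?_
            split <;> simp
        _ = (r : ℝ≥0∞) * h (c * ((n : ℝ) + 1) ^ γ) := by
            rw [Finset.sum_const, Finset.card_range, nsmul_eq_mul]
    refine ne_top_of_le_ne_top (ENNReal.mul_ne_top (ENNReal.natCast_ne_top r) hone) ?_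
    calc ∑' (n : ℕ) (l : ℕ), (if l + 1 < r then h (c * ((n : ℝ) + 1) ^ γ) else 0)
        ≤ ∑' n : ℕ, (r : ℝ≥0∞) * h (c * ((n : ℝ) + 1) ^ γ) := ENNReal.tsum_le_tsum hb
      _ = (r : ℝ≥0∞) * ∑' n : ℕ, h (c * ((n : ℝ) + 1) ^ γ) := ENNReal.tsum_mul_left
  have hB : ∑' p : ℕ × ℕ, F ((p.1 + 1) / r, (p.2 + 1) / r) ≠ ⊤ := by
    have hFT : ∑' q : ℕ × ℕ, F q = ∑' p : ℕ × ℕ, T1 p := by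
      have e1 : ∑' q : ℕ × ℕ, F q = ∑' (a : ℕ) (b : ℕ), F (a, b) := ENNReal.tsum_prod'
      have e2 : ∑' p : ℕ × ℕ, T1 p = ∑' (a : ℕ) (b : ℕ), T1 (a, b) := ENNReal.tsum_prod'
      rw [e1, e2]
      have hz1 : ∀ a : ℕ, (∑' b : ℕ, F (a, b)) = ∑' b : ℕ, F (a, b + 1) := by
        intro a
        rw [tsum_eq_zero_add' (f := fun b => F (a, b)) ENNReal.summable]
        simp [hF]
      have hz2 : (∑' b : ℕ, F (0, b + 1)) = 0 := by
        refine ENNReal.tsum_eq_zero.mpr fun b => ?_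
        simp only [hF]
        rw [if_neg]
        rintro ⟨h1, h2⟩
        omega
      calc ∑' (a : ℕ) (b : ℕ), F (a, b) = ∑' (a : ℕ) (b : ℕ), F (a, b + 1) :=
            tsum_congr hz1
        _ = ∑' (a : ℕ) (b : ℕ), F (a + 1, b + 1) := by
            rw [tsum_eq_zero_add' (f := fun a => ∑' b : ℕ, F (a, b + 1)) ENNReal.summable, hz2,
              zero_add]
        _ = ∑' (a : ℕ) (b : ℕ), T1 (a, b) := by
            refine tsum_congr fun a => tsum_congr fun b => ?_
            simp only [hF, hT1]
            by_cases hba : b ≤ a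
            · rw [if_pos (by omega : 1 ≤ b + 1 ∧ b + 1 ≤ a + 1), if_pos hba]
            · rw [if_neg (by omega), if_neg hba]
    have hcomp : ∑' p : ℕ × ℕ, F ((p.1 + 1) / r, (p.2 + 1) / r)
        ≤ ∑' p : ℕ × ℕ, F (p.1 / r, p.2 / r) := by
      exact ENNReal.tsum_comp_le_tsum_of_injective
        (f := fun p : ℕ × ℕ => ((p.1 + 1, p.2 + 1) : ℕ × ℕ))
        (fun a b hab => by
          have h1 := congrArg Prod.fst hab
          have h2 := congrArg Prod.snd hab
          simp only at h1 h2
          exact Prod.ext (by omega) (by omega))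
        (fun p => F (p.1 / r, p.2 / r))
    have hcount : ∑' p : ℕ × ℕ, F (p.1 / r, p.2 / r)
        = ((r : ℝ≥0∞) * (r : ℝ≥0∞)) * ∑' q : ℕ × ℕ, F q := by
      have e3 : ∑' p : ℕ × ℕ, F (p.1 / r, p.2 / r) = ∑' (a : ℕ) (b : ℕ), F (a / r, b / r) :=
        ENNReal.tsum_prod'
      rw [e3]
      have hinner : ∀ a : ℕ, (∑' b : ℕ, F (a / r, b / r))
          = (r : ℝ≥0∞) * ∑' q2 : ℕ, F (a / r, q2) := fun a =>
        tsum_div_count (fun q2 => F (a / r, q2)) hr1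
      calc ∑' (a : ℕ) (b : ℕ), F (a / r, b / r)
          = ∑' a : ℕ, (r : ℝ≥0∞) * ∑' q2 : ℕ, F (a / r, q2) := tsum_congr hinner
        _ = (r : ℝ≥0∞) * ∑' a : ℕ, ∑' q2 : ℕ, F (a / r, q2) := ENNReal.tsum_mul_left
        _ = (r : ℝ≥0∞) * ((r : ℝ≥0∞) * ∑' q1 : ℕ, ∑' q2 : ℕ, F (q1, q2)) := by
            rw [tsum_div_count (fun q1 => ∑' q2 : ℕ, F (q1, q2)) hr1]
        _ = ((r : ℝ≥0∞) * (r : ℝ≥0∞)) * ∑' q : ℕ × ℕ, F q := by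
            have e4 : ∑' q : ℕ × ℕ, F q = ∑' (a : ℕ) (b : ℕ), F (a, b) := ENNReal.tsum_prod'
            rw [e4, mul_assoc]
    refine ne_top_of_le_ne_top ?_ hcomp
    rw [hcount, hFT]
    exact ENNReal.mul_ne_top (ENNReal.mul_ne_top (ENNReal.natCast_ne_top r) (ENNReal.natCast_ne_top r)) hsum
  refine ne_top_of_le_ne_top ?_ (ENNReal.tsum_le_tsum key)
  rw [ENNReal.tsum_add]
  exact ENNReal.add_ne_top.mpr ⟨hA, hB⟩

lemma cesaroA_pos {γ : ℝ} (hγ : -1 < γ) (n : ℕ) : 0 < cesaroA γ n := by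
  refine Finset.prod_pos fun j _ => div_pos ?_ (by positivity)
  have : (0:ℝ) ≤ (j : ℝ) := Nat.cast_nonneg j
  linarith

lemma cesaroA_eq {γ : ℝ} (n : ℕ) :
    cesaroA γ n = (∏ j ∈ Finset.range n, (γ + 1 + j)) / (Nat.factorial n : ℝ) := by
  rw [cesaroA, Finset.prod_div_distrib]
  congr 1
  · exact Finset.prod_congr rfl fun j _ => by ring
  · induction n with
    | zero => simp
    | succ n ih =>
      rw [Finset.prod_range_succ, ih, Nat.factorial_succ]
      push_cast
      ring

lemma cesaroA_tendsto {γ : ℝ} (hγ : -1 < γ) :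
    Filter.Tendsto (fun n : ℕ => cesaroA γ n / (n : ℝ) ^ γ) atTop
      (𝓝 (Real.Gamma (γ + 1))⁻¹) := by
  have hγ1 : 0 < γ + 1 := by linarith
  have hgne : Real.Gamma (γ + 1) ≠ 0 := (Real.Gamma_pos_of_pos hγ1).ne'
  have h_ratio : Filter.Tendsto (fun n : ℕ => (n : ℝ) / (γ + 1 + n)) atTop (𝓝 1) := by
    have hden : Filter.Tendsto (fun n : ℕ => (γ + 1 + (n : ℝ))) atTop atTop :=
      tendsto_atTop_add_const_left _ _ tendsto_natCast_atTop_atTop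
    have h0 : Filter.Tendsto (fun n : ℕ => (γ + 1) / (γ + 1 + (n : ℝ))) atTop (𝓝 0) :=
      Filter.Tendsto.div_atTop tendsto_const_nhds hden
    have heq : ∀ᶠ n : ℕ in atTop, 1 - (γ + 1) / (γ + 1 + (n : ℝ)) = (n : ℝ) / (γ + 1 + n) := by
      filter_upwards [Filter.eventually_ge_atTop 1] with n hn
      have hne : γ + 1 + (n : ℝ) ≠ 0 := by
        have : (1:ℝ) ≤ (n:ℝ) := by exact_mod_cast hn
        positivity
      field_simp
      ring
    have := (tendsto_const_nhds (x := (1:ℝ)) (f := atTop (α := ℕ))).sub h0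
    rw [sub_zero] at this
    exact Filter.Tendsto.congr' heq this
  have h_gseq : Filter.Tendsto (fun n : ℕ => (Real.GammaSeq (γ + 1) n)⁻¹) atTop
      (𝓝 (Real.Gamma (γ + 1))⁻¹) :=
    (Real.GammaSeq_tendsto_Gamma (γ + 1)).inv₀ hgne
  have hmul := h_ratio.mul h_gseq
  rw [one_mul] at hmul
  refine Filter.Tendsto.congr' ?_ hmul
  filter_upwards [Filter.eventually_ge_atTop 1] with n hn
  have hn0 : (0:ℝ) < (n : ℝ) := by exact_mod_cast hn
  have hfact : ((Nat.factorial n : ℕ) : ℝ) ≠ 0 := by positivity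
  have hprodpos : (0:ℝ) < ∏ j ∈ Finset.range (n + 1), (γ + 1 + (j:ℝ)) := by
    refine Finset.prod_pos fun j _ => ?_
    have : (0:ℝ) ≤ (j : ℝ) := Nat.cast_nonneg j
    linarith
  have hgspos : 0 < Real.GammaSeq (γ + 1) n := by
    rw [Real.GammaSeq]
    have : (0:ℝ) < (n : ℝ) ^ (γ + 1) := Real.rpow_pos_of_pos hn0 _
    positivity
  have hnγ : (0:ℝ) < (n : ℝ) ^ γ := Real.rpow_pos_of_pos hn0 _
  have hden : γ + 1 + (n:ℝ) > 0 := by positivity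
  -- the identity
  rw [Real.GammaSeq, cesaroA_eq]
  rw [Finset.prod_range_succ, Real.rpow_add_one hn0.ne']
  push_cast
  have hP : (∏ x ∈ Finset.range n, (γ + 1 + (x:ℝ))) ≠ 0 := by
    refine ne_of_gt (Finset.prod_pos fun j _ => ?_)
    have : (0:ℝ) ≤ (j : ℝ) := Nat.cast_nonneg j
    linarith
  field_simp

lemma bound_of_tendsto {u : ℕ → ℝ} {L : ℝ} (hL : 0 < L)
    (hu : ∀ j : ℕ, 1 ≤ j → 0 < u j)
    (h : Filter.Tendsto u atTop (𝓝 L)) :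
    ∃ c C : ℝ, 0 < c ∧ 0 < C ∧ ∀ j : ℕ, 1 ≤ j → c ≤ u j ∧ u j ≤ C := by
  have hev : ∀ᶠ j : ℕ in atTop, u j ∈ Set.Ioo (L / 2) (2 * L) := by
    refine h (Ioo_mem_nhds (by linarith) (by linarith))
  obtain ⟨N, hN⟩ := Filter.eventually_atTop.mp hev
  set s : Finset ℕ := Finset.Icc 1 (N + 1) with hs
  have hsne : s.Nonempty := ⟨1, by simp [hs]⟩
  set c := min (L / 2) (s.inf' hsne u) with hc
  set C := max (2 * L) (s.sup' hsne u) with hC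
  have hcpos : 0 < c := by
    rw [hc]
    refine lt_min (by linarith) ?_
    obtain ⟨j, hj, hju⟩ := Finset.exists_mem_eq_inf' hsne u
    rw [hju]
    exact hu j (Finset.mem_Icc.mp hj).1
  have hCpos : 0 < C := lt_of_lt_of_le (by linarith) (le_max_left _ _)
  refine ⟨c, C, hcpos, hCpos, fun j hj => ?_⟩
  by_cases hjN : j ≤ N + 1
  · have hmem : j ∈ s := Finset.mem_Icc.mpr ⟨hj, hjN⟩
    constructor
    · exact le_trans (min_le_right _ _) (Finset.inf'_le u hmem)
    · exact le_trans (Finset.le_sup' u hmem) (le_max_right _ _)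
  · have hjN' : N ≤ j := by omega
    have := hN j hjN'
    exact ⟨le_trans (min_le_left _ _) this.1.le, le_trans this.2.le (le_max_left _ _)⟩

lemma cesaro_bounds {γ : ℝ} (hγ : -1 < γ) :
    ∃ c C : ℝ, 0 < c ∧ 0 < C ∧ ∀ n : ℕ, 1 ≤ n →
      c * (n : ℝ) ^ γ ≤ cesaroA γ n ∧ cesaroA γ n ≤ C * (n : ℝ) ^ γ := by
  have hL : 0 < (Real.Gamma (γ + 1))⁻¹ :=
    inv_pos.mpr (Real.Gamma_pos_of_pos (by linarith))
  have hu : ∀ j : ℕ, 1 ≤ j → 0 < cesaroA γ j / (j : ℝ) ^ γ := by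
    intro j hj
    have : (0:ℝ) < (j:ℝ) := by exact_mod_cast hj
    exact div_pos (cesaroA_pos hγ j) (Real.rpow_pos_of_pos this _)
  obtain ⟨c, C, hc, hC, hb⟩ := bound_of_tendsto hL hu (cesaroA_tendsto hγ)
  refine ⟨c, C, hc, hC, fun n hn => ?_⟩
  have hnp : (0:ℝ) < (n:ℝ) ^ γ := Real.rpow_pos_of_pos (by exact_mod_cast hn) _
  obtain ⟨h1, h2⟩ := hb n hn
  constructor
  · rw [le_div_iff₀ hnp] at h1; linarith
  · rw [div_le_iff₀ hnp] at h2; linarith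

lemma ratio_bounds {γ : ℝ} (hγ0 : 0 < γ) (hγ1 : γ ≤ 1) :
    ∃ ρ σ : ℝ, 0 < ρ ∧ 0 < σ ∧ ∀ m k : ℕ,
      ρ * theta γ (m + 1) (max k 1) ≤ cesaroA γ (m + 1) / cesaroA (γ - 1) k ∧
      cesaroA γ (m + 1) / cesaroA (γ - 1) k ≤ σ * theta γ (m + 1) (max k 1) := by
  obtain ⟨c1, C1, hc1, hC1, hb1⟩ := cesaro_bounds (γ := γ) (by linarith)
  obtain ⟨c2, C2, hc2, hC2, hb2⟩ := cesaro_bounds (γ := γ - 1) (by linarith)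
  set c2' := min c2 1 with hc2'def
  set C2' := max C2 1 with hC2'def
  have hc2' : 0 < c2' := lt_min hc2 one_pos
  have hC2' : 0 < C2' := lt_of_lt_of_le one_pos (le_max_right _ _)
  have hb2' : ∀ k : ℕ, c2' * ((max k 1 : ℕ) : ℝ) ^ (γ - 1) ≤ cesaroA (γ - 1) k ∧
      cesaroA (γ - 1) k ≤ C2' * ((max k 1 : ℕ) : ℝ) ^ (γ - 1) := by
    intro k
    rcases Nat.eq_zero_or_pos k with rfl | hk
    · have h0 : cesaroA (γ - 1) 0 = 1 := by simp [cesaroA]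
      rw [h0]
      norm_num
      constructor
      · exact le_trans (min_le_right _ _) (by norm_num)
      · exact le_trans (by norm_num) (le_max_right C2 1)
    · rw [max_eq_left hk]
      obtain ⟨h1, h2⟩ := hb2 k hk
      have hkp : (0:ℝ) < (k:ℝ) ^ (γ - 1) := Real.rpow_pos_of_pos (by exact_mod_cast hk) _
      constructor
      · refine le_trans ?_ h1
        exact mul_le_mul_of_nonneg_right (min_le_left _ _) hkp.le
      · refine le_trans h2 ?_
        exact mul_le_mul_of_nonneg_right (le_max_left _ _) hkp.le
  refine ⟨c1 / C2', C1 / c2', div_pos hc1 hC2', div_pos hC1 hc2', fun m k => ?_⟩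
  set K := max k 1 with hK
  have hK1 : 1 ≤ K := le_max_right _ _
  have hKpos : (0:ℝ) < ((K : ℕ) : ℝ) ^ (γ - 1) := Real.rpow_pos_of_pos (by exact_mod_cast hK1) _
  have hNpos : (0:ℝ) < ((m + 1 : ℕ) : ℝ) ^ γ := Real.rpow_pos_of_pos (by positivity) _
  have hA2pos : 0 < cesaroA (γ - 1) k := cesaroA_pos (by linarith) k
  have hA1pos : 0 < cesaroA γ (m + 1) := cesaroA_pos (by linarith) (m + 1)
  obtain ⟨hn1, hn2⟩ := hb1 (m + 1) (by omega)
  obtain ⟨hd1, hd2⟩ := hb2' k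
  have hthe : theta γ (m + 1) K = ((m + 1 : ℕ) : ℝ) ^ γ * (((K : ℕ) : ℝ) ^ (γ - 1))⁻¹ := by
    rw [theta]
    congr 1
    rw [show (1 - γ) = -(γ - 1) by ring, Real.rpow_neg (Nat.cast_nonneg _)]
  constructor
  · have hdiv : c1 * ((m + 1 : ℕ) : ℝ) ^ γ / (C2' * ((K : ℕ) : ℝ) ^ (γ - 1))
        ≤ cesaroA γ (m + 1) / cesaroA (γ - 1) k :=
      div_le_div₀ (le_of_lt hA1pos) hn1 hA2pos hd2
    refine le_trans (le_of_eq ?_) hdiv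
    rw [hthe]; field_simp
  · have hdiv : cesaroA γ (m + 1) / cesaroA (γ - 1) k
        ≤ C1 * ((m + 1 : ℕ) : ℝ) ^ γ / (c2' * ((K : ℕ) : ℝ) ^ (γ - 1)) :=
      div_le_div₀ (by positivity) hn2 (by positivity) hd1
    refine le_trans hdiv (le_of_eq ?_)
    rw [hthe]; field_simp

lemma quad {h : ℝ → ℝ≥0∞} (hh : Antitone h) {γ δ : ℝ} (hγ : 0 < γ) (hγ1 : γ ≤ 1)
    (hδ : 0 < δ) (hδ1 : δ ≤ 1)
    (hfin : ∀ t : ℝ, 0 < t → h t ≠ ⊤)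
    (hsum : ∑' m : ℕ, ∑' n : ℕ, ∑ k ∈ Icc 1 (m + 1), ∑ l ∈ Icc 1 (n + 1),
        h (theta γ (m + 1) k * theta δ (n + 1) l) ≠ ⊤)
    {c : ℝ} (hc : 0 < c) :
    ∑' m : ℕ, ∑' n : ℕ, ∑ k ∈ Icc 1 (m + 1), ∑ l ∈ Icc 1 (n + 1),
        h (c * (theta γ (m + 1) k * theta δ (n + 1) l)) ≠ ⊤ := by
  set H : ℝ → ℝ≥0∞ := fun t => ∑' n : ℕ, ∑ l ∈ Icc 1 (n + 1), h (t * theta δ (n + 1) l)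
    with hH
  have hHanti : Antitone H := by
    intro t s hts
    refine ENNReal.tsum_le_tsum fun n => Finset.sum_le_sum fun l _ => ?_
    exact hh (mul_le_mul_of_nonneg_right hts (theta_nonneg _ _ _))
  have rearr : ∀ c' : ℝ,
      (∑' m : ℕ, ∑' n : ℕ, ∑ k ∈ Icc 1 (m + 1), ∑ l ∈ Icc 1 (n + 1),
        h (c' * (theta γ (m + 1) k * theta δ (n + 1) l)))
      = ∑' m : ℕ, ∑ k ∈ Icc 1 (m + 1), H (c' * theta γ (m + 1) k) := by
    intro c'
    refine tsum_congr fun m => ?_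
    rw [Summable.tsum_finsetSum (fun k _ => ENNReal.summable)]
    refine Finset.sum_congr rfl fun k _ => ?_
    simp only [hH]
    exact tsum_congr fun n => Finset.sum_congr rfl fun l _ => by rw [mul_assoc]
  have hsum' : ∑' m : ℕ, ∑ k ∈ Icc 1 (m + 1), H (theta γ (m + 1) k) ≠ ⊤ := by
    have h1 : ∑' m : ℕ, ∑ k ∈ Icc 1 (m + 1), H (1 * theta γ (m + 1) k) ≠ ⊤ := by
      rw [← rearr 1]
      refine ne_top_of_le_ne_top hsum (le_of_eq ?_)
      refine tsum_congr fun m => tsum_congr fun n => Finset.sum_congr rfl fun k _ =>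
        Finset.sum_congr rfl fun l _ => by rw [one_mul]
    simpa only [one_mul] using h1
  have hHone : H 1 ≠ ⊤ := by
    refine ne_top_of_le_ne_top hsum' ?_
    have h0 : ∑ k ∈ Icc 1 (0 + 1), H (theta γ (0 + 1) k) ≤
        ∑' m : ℕ, ∑ k ∈ Icc 1 (m + 1), H (theta γ (m + 1) k) :=
      ENNReal.le_tsum 0
    refine le_trans (le_of_eq ?_) h0
    rw [show (0 : ℕ) + 1 = 1 from rfl, Finset.Icc_self, Finset.sum_singleton, theta_one]
  have hHfin : ∀ t : ℝ, 0 < t → H t ≠ ⊤ := by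
    intro t ht
    have hs : ∑' n : ℕ, ∑ l ∈ Icc 1 (n + 1), h (theta δ (n + 1) l) ≠ ⊤ := by
      have := hHone
      simp only [hH, one_mul] at this
      exact this
    exact pair hh hδ hδ1 hfin hs ht
  rw [rearr c]
  exact pair hHanti hγ hγ1 hHfin hsum' hc

lemma quad' {h : ℝ → ℝ≥0∞} (hh : Antitone h) {γ δ : ℝ} (hγ : 0 < γ) (hγ1 : γ ≤ 1)
    (hδ : 0 < δ) (hδ1 : δ ≤ 1)
    (hfin : ∀ t : ℝ, 0 < t → h t ≠ ⊤) {c₀ : ℝ} (hc0 : 0 < c₀)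
    (hsum : ∑' m : ℕ, ∑' n : ℕ, ∑ k ∈ Icc 1 (m + 1), ∑ l ∈ Icc 1 (n + 1),
        h (c₀ * (theta γ (m + 1) k * theta δ (n + 1) l)) ≠ ⊤)
    {c : ℝ} (hc : 0 < c) :
    ∑' m : ℕ, ∑' n : ℕ, ∑ k ∈ Icc 1 (m + 1), ∑ l ∈ Icc 1 (n + 1),
        h (c * (theta γ (m + 1) k * theta δ (n + 1) l)) ≠ ⊤ := by
  have hh' : Antitone (fun t => h (c₀ * t)) := fun t s hts =>
    hh (mul_le_mul_of_nonneg_left hts hc0.le)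
  have hfin' : ∀ t : ℝ, 0 < t → h (c₀ * t) ≠ ⊤ := fun t ht => hfin _ (by positivity)
  have hsum' : ∑' m : ℕ, ∑' n : ℕ, ∑ k ∈ Icc 1 (m + 1), ∑ l ∈ Icc 1 (n + 1),
      (fun t => h (c₀ * t)) (theta γ (m + 1) k * theta δ (n + 1) l) ≠ ⊤ := hsum
  have := quad hh' hγ hγ1 hδ hδ1 hfin' hsum' (c := c / c₀) (by positivity)
  refine ne_top_of_le_ne_top this (le_of_eq ?_)
  refine tsum_congr fun m => tsum_congr fun n => Finset.sum_congr rfl fun k _ =>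
    Finset.sum_congr rfl fun l _ => ?_
  congr 1
  field_simp

end CesaroAux

section Main

open Real ENNReal CesaroAux

lemma sum_range_max_le (u : ℕ → ℝ≥0∞) (n : ℕ) :
    ∑ l ∈ Finset.range (n + 2), u (max l 1) ≤ 2 * ∑ l ∈ Finset.Icc 1 (n + 1), u l := by
  have hIcc : ∑ l ∈ Finset.Icc 1 (n + 1), u l = ∑ i ∈ Finset.range (n + 1), u (i + 1) := by
    rw [← Finset.Ico_add_one_right_eq_Icc, Finset.sum_Ico_eq_sum_range]
    norm_num
    exact Finset.sum_congr rfl fun i _ => by rw [Nat.add_comm 1 i]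
  have h1 : ∑ l ∈ Finset.range (n + 2), u (max l 1)
      = (∑ i ∈ Finset.range (n + 1), u (i + 1)) + u 1 := by
    rw [Finset.sum_range_succ' (fun l => u (max l 1)) (n + 1)]
    have hmx : ∀ i : ℕ, max (i + 1) 1 = i + 1 := fun i => max_eq_left (by omega)
    simp only [hmx]
    rfl
  rw [h1, ← hIcc, two_mul]
  refine add_le_add_right ?_ _
  exact Finset.single_le_sum (fun i _ => zero_le) (by simp)

theorem cesaro_tail_series_iff_power_tail_series
    {Ω : Type*} [MeasureSpace Ω] [IsProbabilityMeasure (ℙ : Measure Ω)]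
    (α β : ℝ) (hα0 : 0 < α) (hαβ : α ≤ β) (hβ1 : β ≤ 1)
    (X : Ω → ℝ) (hmeas : Measurable X) :
    (∑' m : ℕ, ∑' n : ℕ,
        ∑ k ∈ Finset.range (m + 2), ∑ l ∈ Finset.range (n + 2),
          ℙ {ω | cesaroA α (m + 1) * cesaroA β (n + 1) <
            cesaroA (α - 1) (m + 1 - k) * cesaroA (β - 1) (n + 1 - l) * |X ω|} < ⊤)
    ↔ (∑' m : ℕ, ∑' n : ℕ,
        ∑ k ∈ Finset.Icc 1 (m + 1), ∑ l ∈ Finset.Icc 1 (n + 1),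
          ℙ {ω | ((m : ℝ) + 1) ^ α * ((n : ℝ) + 1) ^ β <
            (k : ℝ) ^ (α - 1) * (l : ℝ) ^ (β - 1) * |X ω|} < ⊤) := by
  classical
  have hβ0 : 0 < β := lt_of_lt_of_le hα0 hαβ
  have hα1 : α ≤ 1 := le_trans hαβ hβ1
  have hαm1 : (-1:ℝ) < α - 1 := by linarith
  have hβm1 : (-1:ℝ) < β - 1 := by linarith
  have hαm1' : (-1:ℝ) < α := by linarith
  have hβm1' : (-1:ℝ) < β := by linarith
  set f : ℝ → ℝ≥0∞ := fun t => ℙ {ω | t < |X ω|} with hf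
  have hf_anti : Antitone f := fun s t hst =>
    measure_mono fun ω hω => lt_of_le_of_lt hst hω
  have hf_fin : ∀ t : ℝ, 0 < t → f t ≠ ⊤ := fun t _ => measure_ne_top ℙ _
  have hmeasure_eq : ∀ a b : ℝ, 0 < b → ℙ {ω | a < b * |X ω|} = f (a / b) := by
    intro a b hb
    congr 1
    ext ω
    simp only [Set.mem_setOf_eq]
    rw [div_lt_iff₀ hb, mul_comm]
  -- rewrite of LHS inner double sums
  have hLHS : ∀ m n : ℕ,
      (∑ k ∈ Finset.range (m + 2), ∑ l ∈ Finset.range (n + 2),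
        ℙ {ω | cesaroA α (m + 1) * cesaroA β (n + 1) <
          cesaroA (α - 1) (m + 1 - k) * cesaroA (β - 1) (n + 1 - l) * |X ω|})
      = ∑ k ∈ Finset.range (m + 2), ∑ l ∈ Finset.range (n + 2),
          f (cesaroA α (m + 1) / cesaroA (α - 1) k *
            (cesaroA β (n + 1) / cesaroA (β - 1) l)) := by
    intro m n
    have hrefl_inner : ∀ a : ℕ,
        (∑ l ∈ Finset.range (n + 2),
          ℙ {ω | cesaroA α (m + 1) * cesaroA β (n + 1) <
            cesaroA (α - 1) a * cesaroA (β - 1) (n + 1 - l) * |X ω|})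
        = ∑ l ∈ Finset.range (n + 2),
            ℙ {ω | cesaroA α (m + 1) * cesaroA β (n + 1) <
              cesaroA (α - 1) a * cesaroA (β - 1) l * |X ω|} := by
      intro a
      have h := Finset.sum_range_reflect (fun l => ℙ {ω | cesaroA α (m + 1) * cesaroA β (n + 1) <
              cesaroA (α - 1) a * cesaroA (β - 1) l * |X ω|}) (n + 2)
      simp only [show ∀ j, n + 2 - 1 - j = n + 1 - j from fun j => by omega] at h
      exact h
    have step1 : (∑ k ∈ Finset.range (m + 2), ∑ l ∈ Finset.range (n + 2),
        ℙ {ω | cesaroA α (m + 1) * cesaroA β (n + 1) <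
          cesaroA (α - 1) (m + 1 - k) * cesaroA (β - 1) (n + 1 - l) * |X ω|})
        = ∑ k ∈ Finset.range (m + 2), ∑ l ∈ Finset.range (n + 2),
          ℙ {ω | cesaroA α (m + 1) * cesaroA β (n + 1) <
            cesaroA (α - 1) (m + 1 - k) * cesaroA (β - 1) l * |X ω|} :=
      Finset.sum_congr rfl fun k _ => hrefl_inner (m + 1 - k)
    have step2 : (∑ k ∈ Finset.range (m + 2), ∑ l ∈ Finset.range (n + 2),
          ℙ {ω | cesaroA α (m + 1) * cesaroA β (n + 1) <
            cesaroA (α - 1) (m + 1 - k) * cesaroA (β - 1) l * |X ω|})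
        = ∑ k ∈ Finset.range (m + 2), ∑ l ∈ Finset.range (n + 2),
          ℙ {ω | cesaroA α (m + 1) * cesaroA β (n + 1) <
            cesaroA (α - 1) k * cesaroA (β - 1) l * |X ω|} := by
      have h := Finset.sum_range_reflect (fun k => ∑ l ∈ Finset.range (n + 2),
          ℙ {ω | cesaroA α (m + 1) * cesaroA β (n + 1) <
            cesaroA (α - 1) k * cesaroA (β - 1) l * |X ω|}) (m + 2)
      simp only [show ∀ j, m + 2 - 1 - j = m + 1 - j from fun j => by omega] at h
      exact h
    rw [step1, step2]
    refine Finset.sum_congr rfl fun k _ => Finset.sum_congr rfl fun l _ => ?_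
    have hbpos : 0 < cesaroA (α - 1) k * cesaroA (β - 1) l :=
      mul_pos (cesaroA_pos hαm1 k) (cesaroA_pos hβm1 l)
    rw [hmeasure_eq _ _ hbpos]
    congr 1
    rw [div_mul_div_comm]
  -- rewrite of RHS summands
  have hRHS : ∀ m n : ℕ,
      (∑ k ∈ Finset.Icc 1 (m + 1), ∑ l ∈ Finset.Icc 1 (n + 1),
        ℙ {ω | ((m : ℝ) + 1) ^ α * ((n : ℝ) + 1) ^ β <
          (k : ℝ) ^ (α - 1) * (l : ℝ) ^ (β - 1) * |X ω|})
      = ∑ k ∈ Finset.Icc 1 (m + 1), ∑ l ∈ Finset.Icc 1 (n + 1),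
          f (theta α (m + 1) k * theta β (n + 1) l) := by
    intro m n
    refine Finset.sum_congr rfl fun k hk => Finset.sum_congr rfl fun l hl => ?_
    have hk1 : 1 ≤ k := (Finset.mem_Icc.mp hk).1
    have hl1 : 1 ≤ l := (Finset.mem_Icc.mp hl).1
    have hkpos : (0:ℝ) < (k:ℝ) := by exact_mod_cast hk1
    have hlpos : (0:ℝ) < (l:ℝ) := by exact_mod_cast hl1
    have hbpos : (0:ℝ) < (k : ℝ) ^ (α - 1) * (l : ℝ) ^ (β - 1) :=
      mul_pos (Real.rpow_pos_of_pos hkpos _) (Real.rpow_pos_of_pos hlpos _)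
    rw [hmeasure_eq _ _ hbpos]
    congr 1
    rw [theta, theta]
    push_cast
    rw [show (1 - α) = -(α - 1) by ring, show (1 - β) = -(β - 1) by ring,
      Real.rpow_neg hkpos.le, Real.rpow_neg hlpos.le]
    have h1 : ((k:ℝ) ^ (α - 1)) ≠ 0 := (Real.rpow_pos_of_pos hkpos _).ne'
    have h2 : ((l:ℝ) ^ (β - 1)) ≠ 0 := (Real.rpow_pos_of_pos hlpos _).ne'
    field_simp
  -- ratio bounds
  obtain ⟨ρ1, σ1, hρ1, hσ1, hbnd1⟩ := ratio_bounds hα0 hα1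
  obtain ⟨ρ2, σ2, hρ2, hσ2, hbnd2⟩ := ratio_bounds hβ0 hβ1
  have htheta1 : ∀ m k : ℕ, (0:ℝ) ≤ theta α (m + 1) (max k 1) := fun m k => theta_nonneg _ _ _
  have htheta2 : ∀ n l : ℕ, (0:ℝ) ≤ theta β (n + 1) (max l 1) := fun n l => theta_nonneg _ _ _
  have htL_low : ∀ m n k l : ℕ,
      ρ1 * ρ2 * (theta α (m + 1) (max k 1) * theta β (n + 1) (max l 1))
        ≤ cesaroA α (m + 1) / cesaroA (α - 1) k * (cesaroA β (n + 1) / cesaroA (β - 1) l) := by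
    intro m n k l
    obtain ⟨h1, -⟩ := hbnd1 m k
    obtain ⟨h2, -⟩ := hbnd2 n l
    calc ρ1 * ρ2 * (theta α (m + 1) (max k 1) * theta β (n + 1) (max l 1))
        = (ρ1 * theta α (m + 1) (max k 1)) * (ρ2 * theta β (n + 1) (max l 1)) := by ring
      _ ≤ cesaroA α (m + 1) / cesaroA (α - 1) k * (cesaroA β (n + 1) / cesaroA (β - 1) l) := by
          refine mul_le_mul h1 h2 (mul_nonneg hρ2.le (htheta2 n l)) ?_
          exact le_trans (mul_nonneg hρ1.le (htheta1 m k)) h1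
  have htL_up : ∀ m n k l : ℕ,
      cesaroA α (m + 1) / cesaroA (α - 1) k * (cesaroA β (n + 1) / cesaroA (β - 1) l)
        ≤ σ1 * σ2 * (theta α (m + 1) (max k 1) * theta β (n + 1) (max l 1)) := by
    intro m n k l
    obtain ⟨-, h1⟩ := hbnd1 m k
    obtain ⟨-, h2⟩ := hbnd2 n l
    have hR2 : (0:ℝ) ≤ cesaroA β (n + 1) / cesaroA (β - 1) l :=
      le_of_lt (div_pos (cesaroA_pos hβm1' _) (cesaroA_pos hβm1 _))
    calc cesaroA α (m + 1) / cesaroA (α - 1) k * (cesaroA β (n + 1) / cesaroA (β - 1) l)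
        ≤ (σ1 * theta α (m + 1) (max k 1)) * (σ2 * theta β (n + 1) (max l 1)) := by
          refine mul_le_mul h1 h2 hR2 ?_
          exact mul_nonneg hσ1.le (htheta1 m k)
      _ = σ1 * σ2 * (theta α (m + 1) (max k 1) * theta β (n + 1) (max l 1)) := by ring
  have hsub1 : ∀ m : ℕ, Finset.Icc 1 (m + 1) ⊆ Finset.range (m + 2) := by
    intro m x hx
    rw [Finset.mem_range]
    exact lt_of_le_of_lt (Finset.mem_Icc.mp hx).2 (by omega)
  -- claim 1 : S(σ) ≤ LHS (rewritten)
  have claim1 : (∑' m : ℕ, ∑' n : ℕ, ∑ k ∈ Finset.Icc 1 (m + 1), ∑ l ∈ Finset.Icc 1 (n + 1),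
        f (σ1 * σ2 * (theta α (m + 1) k * theta β (n + 1) l)))
      ≤ ∑' m : ℕ, ∑' n : ℕ, ∑ k ∈ Finset.range (m + 2), ∑ l ∈ Finset.range (n + 2),
          f (cesaroA α (m + 1) / cesaroA (α - 1) k *
            (cesaroA β (n + 1) / cesaroA (β - 1) l)) := by
    refine ENNReal.tsum_le_tsum fun m => ENNReal.tsum_le_tsum fun n => ?_
    calc (∑ k ∈ Finset.Icc 1 (m + 1), ∑ l ∈ Finset.Icc 1 (n + 1),
          f (σ1 * σ2 * (theta α (m + 1) k * theta β (n + 1) l)))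
        ≤ ∑ k ∈ Finset.Icc 1 (m + 1), ∑ l ∈ Finset.Icc 1 (n + 1),
          f (cesaroA α (m + 1) / cesaroA (α - 1) k *
            (cesaroA β (n + 1) / cesaroA (β - 1) l)) := by
          refine Finset.sum_le_sum fun k hk => Finset.sum_le_sum fun l hl => ?_
          have hk' : max k 1 = k := max_eq_left (Finset.mem_Icc.mp hk).1
          have hl' : max l 1 = l := max_eq_left (Finset.mem_Icc.mp hl).1
          have h := htL_up m n k l
          rw [hk', hl'] at h
          exact hf_anti h
      _ ≤ ∑ k ∈ Finset.Icc 1 (m + 1), ∑ l ∈ Finset.range (n + 2),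
          f (cesaroA α (m + 1) / cesaroA (α - 1) k *
            (cesaroA β (n + 1) / cesaroA (β - 1) l)) := by
          refine Finset.sum_le_sum fun k _ => ?_
          exact Finset.sum_le_sum_of_subset (hsub1 n)
      _ ≤ ∑ k ∈ Finset.range (m + 2), ∑ l ∈ Finset.range (n + 2),
          f (cesaroA α (m + 1) / cesaroA (α - 1) k *
            (cesaroA β (n + 1) / cesaroA (β - 1) l)) :=
          Finset.sum_le_sum_of_subset (hsub1 m)
  -- claim 2 : LHS (rewritten) ≤ 4 * S(ρ)
  have claim2 : (∑' m : ℕ, ∑' n : ℕ, ∑ k ∈ Finset.range (m + 2), ∑ l ∈ Finset.range (n + 2),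
          f (cesaroA α (m + 1) / cesaroA (α - 1) k *
            (cesaroA β (n + 1) / cesaroA (β - 1) l)))
      ≤ 4 * ∑' m : ℕ, ∑' n : ℕ, ∑ k ∈ Finset.Icc 1 (m + 1), ∑ l ∈ Finset.Icc 1 (n + 1),
          f (ρ1 * ρ2 * (theta α (m + 1) k * theta β (n + 1) l)) := by
    have hper : ∀ m n : ℕ,
        (∑ k ∈ Finset.range (m + 2), ∑ l ∈ Finset.range (n + 2),
          f (cesaroA α (m + 1) / cesaroA (α - 1) k *
            (cesaroA β (n + 1) / cesaroA (β - 1) l)))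
        ≤ 4 * ∑ k ∈ Finset.Icc 1 (m + 1), ∑ l ∈ Finset.Icc 1 (n + 1),
            f (ρ1 * ρ2 * (theta α (m + 1) k * theta β (n + 1) l)) := by
      intro m n
      calc (∑ k ∈ Finset.range (m + 2), ∑ l ∈ Finset.range (n + 2),
            f (cesaroA α (m + 1) / cesaroA (α - 1) k *
              (cesaroA β (n + 1) / cesaroA (β - 1) l)))
          ≤ ∑ k ∈ Finset.range (m + 2), ∑ l ∈ Finset.range (n + 2),
            f (ρ1 * ρ2 * (theta α (m + 1) (max k 1) * theta β (n + 1) (max l 1))) := by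
            refine Finset.sum_le_sum fun k _ => Finset.sum_le_sum fun l _ => ?_
            exact hf_anti (htL_low m n k l)
        _ ≤ 2 * ∑ k ∈ Finset.Icc 1 (m + 1), ∑ l ∈ Finset.range (n + 2),
            f (ρ1 * ρ2 * (theta α (m + 1) k * theta β (n + 1) (max l 1))) :=
            sum_range_max_le (fun a => ∑ l ∈ Finset.range (n + 2),
              f (ρ1 * ρ2 * (theta α (m + 1) a * theta β (n + 1) (max l 1)))) m
        _ ≤ 2 * ∑ k ∈ Finset.Icc 1 (m + 1), 2 * ∑ l ∈ Finset.Icc 1 (n + 1),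
            f (ρ1 * ρ2 * (theta α (m + 1) k * theta β (n + 1) l)) := by
            refine mul_le_mul_right (Finset.sum_le_sum fun k _ => ?_) 2
            exact sum_range_max_le (fun b =>
              f (ρ1 * ρ2 * (theta α (m + 1) k * theta β (n + 1) b))) n
        _ = 4 * ∑ k ∈ Finset.Icc 1 (m + 1), ∑ l ∈ Finset.Icc 1 (n + 1),
            f (ρ1 * ρ2 * (theta α (m + 1) k * theta β (n + 1) l)) := by
            rw [← Finset.mul_sum, ← mul_assoc]
            norm_num
    calc (∑' m : ℕ, ∑' n : ℕ, ∑ k ∈ Finset.range (m + 2), ∑ l ∈ Finset.range (n + 2),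
          f (cesaroA α (m + 1) / cesaroA (α - 1) k *
            (cesaroA β (n + 1) / cesaroA (β - 1) l)))
        ≤ ∑' m : ℕ, ∑' n : ℕ, 4 * ∑ k ∈ Finset.Icc 1 (m + 1), ∑ l ∈ Finset.Icc 1 (n + 1),
            f (ρ1 * ρ2 * (theta α (m + 1) k * theta β (n + 1) l)) :=
          ENNReal.tsum_le_tsum fun m => ENNReal.tsum_le_tsum fun n => hper m n
      _ = ∑' m : ℕ, 4 * ∑' n : ℕ, ∑ k ∈ Finset.Icc 1 (m + 1), ∑ l ∈ Finset.Icc 1 (n + 1),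
            f (ρ1 * ρ2 * (theta α (m + 1) k * theta β (n + 1) l)) :=
          tsum_congr fun m => ENNReal.tsum_mul_left
      _ = 4 * ∑' m : ℕ, ∑' n : ℕ, ∑ k ∈ Finset.Icc 1 (m + 1), ∑ l ∈ Finset.Icc 1 (n + 1),
            f (ρ1 * ρ2 * (theta α (m + 1) k * theta β (n + 1) l)) :=
          ENNReal.tsum_mul_left
  -- final glue
  have hLHSeq : (∑' m : ℕ, ∑' n : ℕ,
        ∑ k ∈ Finset.range (m + 2), ∑ l ∈ Finset.range (n + 2),
          ℙ {ω | cesaroA α (m + 1) * cesaroA β (n + 1) <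
            cesaroA (α - 1) (m + 1 - k) * cesaroA (β - 1) (n + 1 - l) * |X ω|})
      = ∑' m : ℕ, ∑' n : ℕ, ∑ k ∈ Finset.range (m + 2), ∑ l ∈ Finset.range (n + 2),
          f (cesaroA α (m + 1) / cesaroA (α - 1) k *
            (cesaroA β (n + 1) / cesaroA (β - 1) l)) :=
    tsum_congr fun m => tsum_congr fun n => hLHS m n
  have hRHSeq : (∑' m : ℕ, ∑' n : ℕ,
        ∑ k ∈ Finset.Icc 1 (m + 1), ∑ l ∈ Finset.Icc 1 (n + 1),
          ℙ {ω | ((m : ℝ) + 1) ^ α * ((n : ℝ) + 1) ^ β <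
            (k : ℝ) ^ (α - 1) * (l : ℝ) ^ (β - 1) * |X ω|})
      = ∑' m : ℕ, ∑' n : ℕ, ∑ k ∈ Finset.Icc 1 (m + 1), ∑ l ∈ Finset.Icc 1 (n + 1),
          f (theta α (m + 1) k * theta β (n + 1) l) :=
    tsum_congr fun m => tsum_congr fun n => hRHS m n
  rw [lt_top_iff_ne_top, lt_top_iff_ne_top, hLHSeq, hRHSeq]
  constructor
  · intro hL
    have hS : (∑' m : ℕ, ∑' n : ℕ, ∑ k ∈ Finset.Icc 1 (m + 1), ∑ l ∈ Finset.Icc 1 (n + 1),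
        f (σ1 * σ2 * (theta α (m + 1) k * theta β (n + 1) l))) ≠ ⊤ :=
      ne_top_of_le_ne_top hL claim1
    have h1 := quad' hf_anti hα0 hα1 hβ0 hβ1 hf_fin (mul_pos hσ1 hσ2) hS (c := 1) one_pos
    refine ne_top_of_le_ne_top h1 (le_of_eq ?_)
    refine tsum_congr fun m => tsum_congr fun n => Finset.sum_congr rfl fun k _ =>
      Finset.sum_congr rfl fun l _ => by rw [one_mul]
  · intro hR
    have hS1 : (∑' m : ℕ, ∑' n : ℕ, ∑ k ∈ Finset.Icc 1 (m + 1), ∑ l ∈ Finset.Icc 1 (n + 1),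
        f (1 * (theta α (m + 1) k * theta β (n + 1) l))) ≠ ⊤ := by
      refine ne_top_of_le_ne_top hR (le_of_eq ?_)
      refine tsum_congr fun m => tsum_congr fun n => Finset.sum_congr rfl fun k _ =>
        Finset.sum_congr rfl fun l _ => by rw [one_mul]
    have h1 := quad' hf_anti hα0 hα1 hβ0 hβ1 hf_fin one_pos hS1 (c := ρ1 * ρ2)
      (mul_pos hρ1 hρ2)
    refine ne_top_of_le_ne_top ?_ claim2
    exact ENNReal.mul_ne_top (by norm_num) h1

end Main
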